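/- Let A₁,…,A_{n+1} be the vertices of a regular n-simplex with unit side length in ℝⁿ, and let A_{n+2} be the point on the ray from A₁ through the centroid of the opposite face {A₂,…,A_{n+1}}, at distance 1 from A₁. Then for each i ∈ {2,…,n+1}, ‖A_iA_{n+2}‖ = √(2(1 − √((n+1)/(2n)))). -/

import Mathlib

open scoped RealInnerProductSpace

theorem stmt15 (n : ℕ) (hn : 2 ≤ n)
    (A : Fin (n + 1) → EuclideanSpace ℝ (Fin n))
    (B : EuclideanSpace ℝ (Fin n))
    (hreg : ∀ i j : Fin (n + 1), i ≠ j → dist (A i) (A j) = 1)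
    (hray : ∃ t : ℝ, 0 ≤ t ∧
      B = A 0 + t • (((n : ℝ)⁻¹ • ∑ i ∈ Finset.univ.erase 0, A i) - A 0))
    (hdist : dist (A 0) B = 1) :
    ∀ i : Fin (n + 1), i ≠ 0 →
      dist (A i) B = Real.sqrt (2 * (1 - Real.sqrt ((n + 1) / (2 * n)))) := by
  obtain ⟨t, ht0, hB⟩ := hray
  have hn0 : (n : ℝ) ≠ 0 := by positivity
  have hnpos : (0:ℝ) < n := by positivity
  set c : ℝ := ((n:ℝ) + 1) / (2 * n) with hc
  have hcpos : 0 < c := by positivity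
  have hv : ∀ i : Fin (n+1), i ≠ 0 → ‖A i - A 0‖ = 1 := fun i hi => by
    rw [← dist_eq_norm]; exact hreg i 0 hi
  have hvv : ∀ i j : Fin (n+1), i ≠ 0 → j ≠ 0 → i ≠ j →
      ⟪A i - A 0, A j - A 0⟫ = 1/2 := by
    intro i j hi hj hij
    have h1 := hv i hi
    have h2 := hv j hj
    have h3 : ‖(A i - A 0) - (A j - A 0)‖ = 1 := by
      rw [sub_sub_sub_cancel_right, ← dist_eq_norm]; exact hreg i j hij
    have h4 := norm_sub_sq_real (A i - A 0) (A j - A 0)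
    rw [h1, h2, h3] at h4
    linarith
  set w : EuclideanSpace ℝ (Fin n) :=
    (n:ℝ)⁻¹ • ∑ j ∈ Finset.univ.erase 0, (A j - A 0) with hw
  have hcard : (Finset.univ.erase (0 : Fin (n+1))).card = n := by
    simp
  have hGw : ((n : ℝ)⁻¹ • ∑ i ∈ Finset.univ.erase 0, A i) - A 0 = w := by
    rw [hw, Finset.sum_sub_distrib, Finset.sum_const, hcard, ← Nat.cast_smul_eq_nsmul ℝ,
      smul_sub, smul_smul, inv_mul_cancel₀ hn0, one_smul]
  rw [hGw] at hB
  -- inner products with w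
  have hsum : ∀ i : Fin (n+1), i ≠ 0 →
      ∑ j ∈ Finset.univ.erase 0, ⟪A i - A 0, A j - A 0⟫ = 1 + ((n:ℝ) - 1) / 2 := by
    intro i hi
    have hmem : i ∈ Finset.univ.erase (0 : Fin (n+1)) := Finset.mem_erase.2 ⟨hi, Finset.mem_univ _⟩
    rw [← Finset.add_sum_erase _ _ hmem]
    have h1 : ⟪A i - A 0, A i - A 0⟫ = 1 := by
      rw [real_inner_self_eq_norm_sq, hv i hi]; norm_num
    have h2 : ∑ j ∈ (Finset.univ.erase 0).erase i, ⟪A i - A 0, A j - A 0⟫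
        = ((n:ℝ) - 1) / 2 := by
      have hterm : ∀ j ∈ (Finset.univ.erase 0).erase i, ⟪A i - A 0, A j - A 0⟫ = 1/2 := by
        intro j hj
        have hji := (Finset.mem_erase.1 hj).1
        have hj0 := (Finset.mem_erase.1 (Finset.mem_of_mem_erase hj)).1
        exact hvv i j hi hj0 (Ne.symm hji)
      have h2n : (1:ℕ) ≤ n := le_trans (by norm_num) hn
      rw [Finset.sum_congr rfl hterm, Finset.sum_const,
        Finset.card_erase_of_mem hmem, hcard, nsmul_eq_mul, Nat.cast_sub h2n]
      push_cast
      ring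
    rw [h1, h2]
  have hiw : ∀ i : Fin (n+1), i ≠ 0 → ⟪A i - A 0, w⟫ = c := by
    intro i hi
    rw [hw, inner_smul_right, inner_sum, hsum i hi, hc]
    field_simp
    ring
  have hww : ⟪w, w⟫ = c := by
    rw [hw, real_inner_smul_left, inner_smul_right, sum_inner]
    have : ∑ j ∈ Finset.univ.erase (0:Fin (n+1)), ⟪A j - A 0, ∑ k ∈ Finset.univ.erase 0, (A k - A 0)⟫
        = ∑ j ∈ Finset.univ.erase (0:Fin (n+1)), (1 + ((n:ℝ) - 1)/2) := by
      refine Finset.sum_congr rfl fun j hj => ?_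
      have hj0 : j ≠ 0 := (Finset.mem_erase.1 hj).1
      rw [inner_sum, hsum j hj0]
    rw [this, Finset.sum_const, hcard, nsmul_eq_mul, hc]
    field_simp
    ring
  have hnw : ‖w‖ = Real.sqrt c := by
    rw [← Real.sqrt_sq (norm_nonneg w), ← real_inner_self_eq_norm_sq, hww]
  have hsc : 0 < Real.sqrt c := Real.sqrt_pos.2 hcpos
  have ht : t * Real.sqrt c = 1 := by
    have : dist (A 0) B = t * ‖w‖ := by
      rw [hB, dist_eq_norm]
      simp [norm_smul, abs_of_nonneg ht0]
    rw [this, hnw] at hdist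
    exact hdist
  -- c ≤ 1
  have hc1 : Real.sqrt c ≤ 1 := by
    rw [show (1:ℝ) = Real.sqrt 1 by simp]
    apply Real.sqrt_le_sqrt
    rw [hc, div_le_one (by positivity)]
    have : (1:ℝ) ≤ n := by exact_mod_cast le_trans (by norm_num) hn
    linarith
  intro i hi
  have hsq : dist (A i) B ^ 2 = 2 * (1 - Real.sqrt c) := by
    have h1 : dist (A i) B = ‖(A i - A 0) - t • w‖ := by
      rw [hB, dist_eq_norm]
      congr 1
      abel
    rw [h1]
    rw [norm_sub_sq_real, real_inner_smul_right, hiw i hi, hv i hi,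
      norm_smul, hnw, Real.norm_eq_abs, abs_of_nonneg ht0, mul_pow,
      Real.sq_sqrt hcpos.le]
    have htc : t ^ 2 * c = 1 := by
      have : (t * Real.sqrt c) ^ 2 = 1 := by rw [ht]; norm_num
      rwa [mul_pow, Real.sq_sqrt hcpos.le] at this
    have h2tc : t * c = Real.sqrt c := by
      have : t * Real.sqrt c * Real.sqrt c = Real.sqrt c := by rw [ht, one_mul]
      rwa [mul_assoc, Real.mul_self_sqrt hcpos.le] at this
    rw [htc, h2tc]
    ring
  have : dist (A i) B = Real.sqrt (2 * (1 - Real.sqrt c)) := by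
    rw [← hsq, Real.sqrt_sq dist_nonneg]
  rw [this, hc]
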